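/- Let a : Fin n → ℝ be positive with n ≥ 2. Then ∑ over all (n−1)-element subsets S of Fin n of (∏_{i∈S} aᵢ)/(∑_{i∈S} aᵢ) ≤ (n/(n−1)) · (∑ over all (n−1)-element subsets S of ∏_{i∈S} aᵢ) / (∑_{i=1}^n aᵢ). -/

import Mathlib

theorem stmt3 (n : ℕ) (hn : 2 ≤ n) (a : Fin n → ℝ) (ha : ∀ i, 0 < a i) :
    ∑ S ∈ Finset.univ.powersetCard (n-1), (∏ i ∈ S, a i) / (∑ i ∈ S, a i) ≤
      ((n:ℝ)/((n:ℝ)-1)) * (∑ S ∈ Finset.univ.powersetCard (n-1), ∏ i ∈ S, a i) / (∑ i, a i) := by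
  classical
  have hinj : Function.Injective (fun i : Fin n => ({i}ᶜ : Finset (Fin n))) := by
    intro i j h
    simpa using congrArg compl h
  have hcardc : ∀ i : Fin n, ({i}ᶜ : Finset (Fin n)).card = n - 1 := by
    intro i
    simp [Finset.card_compl]
  have himg : Finset.univ.powersetCard (n-1) =
      Finset.univ.image (fun i : Fin n => ({i}ᶜ : Finset (Fin n))) := by
    refine (Finset.eq_of_subset_of_card_le ?_ ?_).symm
    · intro S hS
      simp only [Finset.mem_image, Finset.mem_univ, true_and] at hS
      obtain ⟨i, rfl⟩ := hS
      simp [Finset.mem_powersetCard, hcardc i]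
    · rw [Finset.card_powersetCard, Finset.card_univ, Fintype.card_fin,
        Finset.card_image_of_injective _ hinj, Finset.card_univ, Fintype.card_fin]
      have : n.choose (n-1) = n := by
        have h1 : n - (n-1) = 1 := by omega
        rw [← Nat.choose_symm (Nat.sub_le n 1), h1, Nat.choose_one_right]
      omega
  rw [himg, Finset.sum_image (fun i _ j _ h => hinj h), Finset.sum_image (fun i _ j _ h => hinj h)]
  set T := ∑ i, a i with hT
  set P := ∏ i, a i with hP
  have hTpos : 0 < T := Finset.sum_pos (fun i _ => ha i) ⟨⟨0, by omega⟩, Finset.mem_univ _⟩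
  have hPpos : 0 < P := Finset.prod_pos (fun i _ => ha i)
  have hsumc : ∀ i : Fin n, ∑ j ∈ ({i}ᶜ : Finset (Fin n)), a j = T - a i := by
    intro i
    have := Finset.sum_compl_add_sum ({i} : Finset (Fin n)) a
    simp only [Finset.sum_singleton] at this
    linarith
  have hprodc : ∀ i : Fin n, ∏ j ∈ ({i}ᶜ : Finset (Fin n)), a j = P / a i := by
    intro i
    have h := Finset.prod_compl_mul_prod ({i} : Finset (Fin n)) a
    simp only [Finset.prod_singleton] at h
    rw [eq_div_iff (ha i).ne']
    exact h
  have hTa : ∀ i, a i < T := by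
    intro i
    have hnt : Nontrivial (Fin n) := Fin.nontrivial_iff_two_le.mpr hn
    obtain ⟨j, hj⟩ := exists_ne i
    calc a i < a i + a j := by linarith [ha j]
      _ ≤ T := by
        rw [hT]
        calc a i + a j = ∑ k ∈ {i, j}, a k := by rw [Finset.sum_pair (Ne.symm hj)]
          _ ≤ ∑ k, a k := Finset.sum_le_sum_of_subset_of_nonneg (Finset.subset_univ _)
            (fun k _ _ => (ha k).le)
  have hnpos : (1:ℝ) ≤ (n:ℝ) - 1 := by
    have : (2:ℝ) ≤ (n:ℝ) := by exact_mod_cast hn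
    linarith
  have hn1 : (0:ℝ) < (n:ℝ) - 1 := by linarith
  have hAMHM : ∀ i : Fin n, ((n:ℝ) - 1)^2 ≤ (T - a i) * ∑ j ∈ ({i}ᶜ : Finset (Fin n)), 1 / a j := by
    intro i
    have := Finset.sum_sq_le_sum_mul_sum_of_sq_eq_mul ({i}ᶜ : Finset (Fin n))
      (r := fun _ => (1:ℝ)) (f := a) (g := fun j => 1 / a j)
      (fun j _ => (ha j).le) (fun j _ => (div_pos one_pos (ha j)).le)
      (fun j _ => by rw [one_pow, mul_one_div, div_self (ha j).ne'])
    simp only [Finset.sum_const, hcardc i, nsmul_eq_mul, mul_one] at this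
    rw [hsumc i] at this
    calc ((n:ℝ) - 1)^2 = ((n - 1 : ℕ) : ℝ)^2 := by
          congr 1
          push_cast [Nat.cast_sub (by omega : 1 ≤ n)]
          ring
      _ ≤ _ := this
  have hcore : ((n:ℝ) - 1) * ∑ i, 1 / (T - a i) ≤ ∑ i, 1 / a i := by
    have step : ∀ i : Fin n, ((n:ℝ) - 1) * (1 / (T - a i)) ≤
        (1 / ((n:ℝ) - 1)) * ∑ j ∈ ({i}ᶜ : Finset (Fin n)), 1 / a j := by
      intro i
      have hTai : 0 < T - a i := by linarith [hTa i]
      have key : ((n:ℝ)-1)^2 * (1 / (T - a i)) ≤ ∑ j ∈ ({i}ᶜ : Finset (Fin n)), 1 / a j := by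
        rw [mul_one_div, div_le_iff₀ hTai]
        calc ((n:ℝ)-1)^2 ≤ (T - a i) * ∑ j ∈ ({i}ᶜ : Finset (Fin n)), 1 / a j := hAMHM i
          _ = (∑ j ∈ ({i}ᶜ : Finset (Fin n)), 1 / a j) * (T - a i) := by ring
      have heq : ((n:ℝ) - 1) * (1 / (T - a i))
          = (1 / ((n:ℝ) - 1)) * (((n:ℝ)-1)^2 * (1 / (T - a i))) := by
        field_simp
      rw [heq]
      exact mul_le_mul_of_nonneg_left key (by positivity)
    calc ((n:ℝ) - 1) * ∑ i, 1 / (T - a i)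
        = ∑ i, ((n:ℝ) - 1) * (1 / (T - a i)) := Finset.mul_sum _ _ _
      _ ≤ ∑ i, (1 / ((n:ℝ) - 1)) * ∑ j ∈ ({i}ᶜ : Finset (Fin n)), 1 / a j :=
          Finset.sum_le_sum (fun i _ => step i)
      _ = (1 / ((n:ℝ) - 1)) * ∑ i, ∑ j ∈ ({i}ᶜ : Finset (Fin n)), 1 / a j := by
          rw [← Finset.mul_sum]
      _ = ∑ i, 1 / a i := by
          have hcs : ∀ i : Fin n, ∑ j ∈ ({i}ᶜ : Finset (Fin n)), 1 / a j
              = (∑ j, 1 / a j) - 1 / a i := by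
            intro i
            have := Finset.sum_compl_add_sum ({i} : Finset (Fin n)) (fun j => 1 / a j)
            simp only [Finset.sum_singleton] at this
            linarith
          simp_rw [hcs]
          rw [Finset.sum_sub_distrib, Finset.sum_const, Finset.card_univ, Fintype.card_fin,
            nsmul_eq_mul]
          field_simp
  simp_rw [hprodc, hsumc]
  have hterm : ∀ i : Fin n, (P / a i) / (T - a i) = (P / T) * (1 / a i + 1 / (T - a i)) := by
    intro i
    have hTai : (T - a i) ≠ 0 := by linarith [hTa i]
    field_simp [(ha i).ne', hTpos.ne']
    ring
  have hterm2 : ∀ i : Fin n, P / a i = P * (1 / a i) := fun i => by ring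
  simp_rw [hterm, hterm2, ← Finset.mul_sum]
  rw [Finset.sum_add_distrib]
  have hB : ∑ i, 1/(T - a i) ≤ (∑ i, 1/a i)/((n:ℝ)-1) := by
    rw [le_div_iff₀ hn1]
    linarith [hcore]
  have hrhs : (n:ℝ)/((n:ℝ)-1) * (P * ∑ i, 1/a i) / T
      = P/T * ((∑ i, 1/a i) + (∑ i, 1/a i)/((n:ℝ)-1)) := by
    field_simp
    ring
  rw [hrhs]
  have hmul := mul_le_mul_of_nonneg_left
    (by linarith [hB] : (∑ i, 1/a i) + ∑ i, 1/(T-a i)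
      ≤ (∑ i, 1/a i) + (∑ i, 1/a i)/((n:ℝ)-1))
    (by positivity : (0:ℝ) ≤ P/T)
  linarith [hmul]
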